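/- Let D₉ be the dihedral group of order 18 = ⟨a, b | a⁹ = b² = 1, bab = a^{-1}⟩, F_q a field with characteristic different from 2, 3, 5, 7 and with q of multiplicative order 6 modulo 9. Let e = Ĥ₁ − Ĥ₀ where H₁ = ⟨a³⟩ and H₀ = ⟨a⟩, and f = e₁₁ − e₁₂. Then the left ideal I = (F_q D₉)f has F_q-dimension 2 and minimum Hamming weight 15. -/

import Mathlib

open scoped Classical

/-- `hat F S` is the element `Ŝ = (1/|S|) ∑_{s ∈ S} s` of the group algebra `F G`. -/
noncomputable def hat (F : Type*) [Field F] {G : Type*} [Group G] [Fintype G]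
    (S : Subgroup G) : MonoidAlgebra F G :=
  (Nat.card S : F)⁻¹ • ∑ g : G, if g ∈ S then MonoidAlgebra.of F G g else 0

/-- Hamming weight: the number of nonzero coefficients. -/
noncomputable def wt {F : Type*} [Field F] {G : Type*} [Group G]
    (α : MonoidAlgebra F G) : ℕ :=
  α.coeff.support.card

open DihedralGroup MonoidAlgebra Subgroup Finset


lemma dih_castnz {F : Type*} [Field F] [Fintype F]
    (hchar : ringChar F ∉ ({2, 3, 5, 7} : Set ℕ)) :
    ∀ z : ℤ, z ≠ 0 → z.natAbs ∣ 2520 → (z : F) ≠ 0 := by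
  intro z hz hdvd h0
  haveI : CharP F (ringChar F) := ringChar.charP F
  have hp : (ringChar F).Prime := CharP.char_is_prime F (ringChar F)
  have h1 : (ringChar F : ℤ) ∣ z := (CharP.intCast_eq_zero_iff F (ringChar F) z).mp h0
  have h2 : ringChar F ∣ z.natAbs := by
    have := Int.natAbs_dvd_natAbs.mpr h1
    simpa using this
  have h3 : ringChar F ∣ 2520 := h2.trans hdvd
  have h4 : ringChar F ∣ 2 * (2 * (2 * (3 * (3 * (5 * 7))))) := by norm_num at h3 ⊢; exact h3
  simp only [Set.mem_insert_iff, Set.mem_singleton_iff, not_or] at hchar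
  obtain ⟨c2, c3, c5, c7⟩ := hchar
  rcases (Nat.Prime.dvd_mul hp).mp h4 with h | h
  · exact c2 ((Nat.prime_dvd_prime_iff_eq hp Nat.prime_two).mp h)
  rcases (Nat.Prime.dvd_mul hp).mp h with h | h
  · exact c2 ((Nat.prime_dvd_prime_iff_eq hp Nat.prime_two).mp h)
  rcases (Nat.Prime.dvd_mul hp).mp h with h | h
  · exact c2 ((Nat.prime_dvd_prime_iff_eq hp Nat.prime_two).mp h)
  rcases (Nat.Prime.dvd_mul hp).mp h with h | h
  · exact c3 ((Nat.prime_dvd_prime_iff_eq hp Nat.prime_three).mp h)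
  rcases (Nat.Prime.dvd_mul hp).mp h with h | h
  · exact c3 ((Nat.prime_dvd_prime_iff_eq hp Nat.prime_three).mp h)
  rcases (Nat.Prime.dvd_mul hp).mp h with h | h
  · exact c5 ((Nat.prime_dvd_prime_iff_eq hp (by norm_num)).mp h)
  · exact c7 ((Nat.prime_dvd_prime_iff_eq hp (by norm_num)).mp h)

/-- value pattern -/
def dihV : ℕ → ℤ := fun k => if k = 0 then 4 else if k = 1 then -5 else 1

def dihA : ℕ → ℤ := fun k => dihV (k % 3)
def dihB : ℕ → ℤ := fun k => if k < 3 then dihV ((k + 2) % 3) else dihV ((k + 1) % 3)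

def dihCls : DihedralGroup 9 → ℕ :=
  fun g => match g with
  | .r i => i.val % 3
  | .sr i => 3 + i.val % 3

lemma hat_apply (F : Type*) [Field F] {G : Type*} [Group G] [Fintype G]
    (S : Subgroup G) (x : G) :
    (hat F S).coeff x = (Nat.card S : F)⁻¹ * (if x ∈ S then 1 else 0) := by
  unfold hat
  rw [MonoidAlgebra.coeff_smul_apply, smul_eq_mul]
  congr 1
  rw [MonoidAlgebra.coeff_sum, Finsupp.finset_sum_apply]
  simp only [MonoidAlgebra.of_apply, MonoidAlgebra.coeff_single, Finsupp.single_apply,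
    apply_ite (fun (z : MonoidAlgebra F G) => z.coeff x), MonoidAlgebra.coeff_zero,
    Finsupp.coe_zero, Pi.zero_apply]
  have h : ∀ y : G, (if y ∈ S then if y = x then (1:F) else 0 else 0)
      = if y = x then (if x ∈ S then 1 else 0) else 0 := by
    intro y
    by_cases hy : y = x
    · subst hy; simp
    · simp [hy]
  simp_rw [h]
  simp

lemma dih_inv_r (n : ℕ) (i : ZMod n) : (r i : DihedralGroup n)⁻¹ = r (-i) := by
  symm; apply eq_inv_of_mul_eq_one_left
  rw [r_mul_r, neg_add_cancel, one_def]

lemma dih_inv_sr (n : ℕ) (i : ZMod n) : (sr i : DihedralGroup n)⁻¹ = sr i := by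
  symm; apply eq_inv_of_mul_eq_one_left
  rw [sr_mul_sr, sub_self, one_def]

lemma zp3 : ∀ x : DihedralGroup 9, x ∈ Subgroup.zpowers (r 1 ^ 3) ↔ x ∈ ({r 0, r 3, r 6} : Set (DihedralGroup 9)) := by
  have h3 : (r 1 ^ 3 : DihedralGroup 9) = r 3 := by decide
  rw [h3]
  intro x
  constructor
  · intro hx
    have h : Subgroup.zpowers (r 3 : DihedralGroup 9) ≤
      { carrier := {r 0, r 3, r 6}
        one_mem' := by decide
        mul_mem' := by decide
        inv_mem' := by decide } := by
      rw [Subgroup.zpowers_le]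
      right; left; rfl
    exact h hx
  · rintro (rfl | rfl | rfl)
    · exact ⟨0, by decide⟩
    · exact ⟨1, by decide⟩
    · exact ⟨2, by decide⟩

lemma zp9 : ∀ x : DihedralGroup 9, x ∈ Subgroup.zpowers (r (1 : ZMod 9)) ↔ ∃ i, x = r i := by
  intro x
  constructor
  · intro hx
    have h : Subgroup.zpowers (r (1 : ZMod 9)) ≤
      { carrier := {g : DihedralGroup 9 | ∃ i, g = r i}
        one_mem' := ⟨0, one_def⟩
        mul_mem' := by
          rintro g h ⟨i, rfl⟩ ⟨j, rfl⟩
          exact ⟨i + j, r_mul_r i j⟩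
        inv_mem' := by
          rintro g ⟨i, rfl⟩
          exact ⟨-i, dih_inv_r 9 i⟩ } := by
      rw [Subgroup.zpowers_le]
      exact ⟨1, rfl⟩
    exact h hx
  · rintro ⟨i, rfl⟩
    refine ⟨(i.val : ℤ), ?_⟩
    show r 1 ^ (i.val : ℤ) = r i
    rw [zpow_natCast, r_one_pow]
    congr 1
    simp [ZMod.natCast_val, ZMod.cast_id]

lemma card3 : Nat.card (Subgroup.zpowers (r 1 ^ 3 : DihedralGroup 9)) = 3 := by
  have h3 : (r 1 ^ 3 : DihedralGroup 9) = r 3 := by decide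
  rw [h3, Nat.card_zpowers, DihedralGroup.orderOf_r]
  decide

lemma card9 : Nat.card (Subgroup.zpowers (r (1 : ZMod 9) : DihedralGroup 9)) = 9 := by
  rw [Nat.card_zpowers, DihedralGroup.orderOf_r_one]

set_option maxHeartbeats 2000000 in
theorem stmt15 {F : Type*} [Field F] [Fintype F]
    (hchar : ringChar F ∉ ({2, 3, 5, 7} : Set ℕ))
    (hcop : Nat.Coprime (Fintype.card F) 9)
    -- `q` has multiplicative order `6` modulo `9`
    (hord : orderOf (ZMod.unitOfCoprime (Fintype.card F) hcop : (ZMod 9)ˣ) = 6) :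
    let D := DihedralGroup 9
    let a : MonoidAlgebra F D := MonoidAlgebra.of F D (DihedralGroup.r 1)
    let b : MonoidAlgebra F D := MonoidAlgebra.of F D (DihedralGroup.sr 0)
    let e : MonoidAlgebra F D :=
      hat F (Subgroup.zpowers (DihedralGroup.r 1 ^ 3)) -
        hat F (Subgroup.zpowers (DihedralGroup.r (1 : ZMod 9)))
    let f : MonoidAlgebra F D := ((2 : F)⁻¹ • (1 + b)) * e -
      ((2 : F)⁻¹ • (1 + b)) * a * ((2 : F)⁻¹ • (1 - b)) * e
    Module.finrank F (Submodule.restrictScalars F (Ideal.span {f})) = 2 ∧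
      IsLeast {n : ℕ | ∃ α ∈ Ideal.span {f}, α ≠ 0 ∧ wt α = n} 15 := by
  intro D a b e f
  have hnz : ∀ z : ℤ, z ≠ 0 → z.natAbs ∣ 2520 → (z : F) ≠ 0 := dih_castnz hchar
  have h2 : (2:F) ≠ 0 := by have := hnz 2 (by norm_num) (by norm_num); push_cast at this; exact this
  have h3 : (3:F) ≠ 0 := by have := hnz 3 (by norm_num) (by norm_num); push_cast at this; exact this
  have h9 : (9:F) ≠ 0 := by have := hnz 9 (by norm_num) (by norm_num); push_cast at this; exact this
  have h36 : (36:F) ≠ 0 := by have := hnz 36 (by norm_num) (by norm_num); push_cast at this; exact this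
  have h1944 : (1944:F) ≠ 0 := by
    have hh := mul_ne_zero (mul_ne_zero (mul_ne_zero h2 h2) h2)
      (mul_ne_zero (mul_ne_zero (mul_ne_zero (mul_ne_zero h3 h3) h3) h3) h3)
    norm_num at hh
    exact hh
  have e2 : (2:F)⁻¹ = 18 / 36 := by rw [eq_div_iff h36]; norm_num [inv_mul_eq_div, div_eq_iff h2]
  have e3 : (3:F)⁻¹ = 12 / 36 := by rw [eq_div_iff h36]; norm_num [inv_mul_eq_div, div_eq_iff h3]
  have e9 : (9:F)⁻¹ = 4 / 36 := by rw [eq_div_iff h36]; norm_num [inv_mul_eq_div, div_eq_iff h9]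
  have e36 : (36:F)⁻¹ = 36 / 36 / 36 := by rw [div_self h36, one_div]
  -- coefficients of e
  have he_app : ∀ g : DihedralGroup 9, e.coeff g =
      (hat F (Subgroup.zpowers (r 1 ^ 3 : DihedralGroup 9))).coeff g -
        (hat F (Subgroup.zpowers (r (1 : ZMod 9) : DihedralGroup 9))).coeff g := by
    intro g
    show (hat F (Subgroup.zpowers (r 1 ^ 3 : DihedralGroup 9)) -
        hat F (Subgroup.zpowers (r (1 : ZMod 9) : DihedralGroup 9))).coeff g = _
    rw [MonoidAlgebra.coeff_sub]
    exact Finsupp.sub_apply _ _ _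
  have he_r : ∀ i : ZMod 9, e.coeff (r i) = (if i.val % 3 = 0 then (3:F)⁻¹ else 0) - (9:F)⁻¹ := by
    intro i
    rw [he_app, hat_apply, hat_apply, card3, card9]
    have hm3 : (r i ∈ Subgroup.zpowers (r 1 ^ 3 : DihedralGroup 9)) ↔ i.val % 3 = 0 := by
      rw [zp3]
      show (r i = r 0 ∨ r i = r 3 ∨ r i = r 6) ↔ _
      simp only [DihedralGroup.r.injEq]
      revert i; decide
    have hm9 : (r i ∈ Subgroup.zpowers (r (1:ZMod 9) : DihedralGroup 9)) := (zp9 _).mpr ⟨i, rfl⟩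
    rw [if_pos hm9]
    by_cases h : i.val % 3 = 0
    · rw [if_pos (hm3.mpr h), if_pos h]; push_cast; ring
    · rw [if_neg (fun hh => h (hm3.mp hh)), if_neg h]; push_cast; ring
  have he_sr : ∀ i : ZMod 9, e.coeff (sr i) = 0 := by
    intro i
    rw [he_app, hat_apply, hat_apply]
    have hm3 : ¬ (sr i ∈ Subgroup.zpowers (r 1 ^ 3 : DihedralGroup 9)) := by
      rw [zp3]; rintro (h | h | h) <;> cases h
    have hm9 : ¬ (sr i ∈ Subgroup.zpowers (r (1:ZMod 9) : DihedralGroup 9)) := by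
      rw [zp9]; rintro ⟨j, h⟩; simp_all
    rw [if_neg hm3, if_neg hm9]
    ring
  -- coefficient machinery for f
  have hb : b = MonoidAlgebra.single (sr 0 : D) (1:F) := rfl
  have ha : a = MonoidAlgebra.single (r 1 : D) (1:F) := rfl
  have hP : ∀ (w : MonoidAlgebra F D) (g : DihedralGroup 9),
      (((2:F)⁻¹ • (1 + b)) * w).coeff g = 2⁻¹ * (w.coeff g + w.coeff ((sr 0 : DihedralGroup 9) * g)) := by
    intro w g
    rw [smul_mul_assoc, MonoidAlgebra.coeff_smul_apply, add_mul, one_mul, MonoidAlgebra.coeff_add,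
      Finsupp.add_apply, hb, MonoidAlgebra.coeff_single_mul_apply, dih_inv_sr, one_mul, smul_eq_mul]
  have hN : ∀ (w : MonoidAlgebra F D) (g : DihedralGroup 9),
      (((2:F)⁻¹ • (1 - b)) * w).coeff g = 2⁻¹ * (w.coeff g - w.coeff ((sr 0 : DihedralGroup 9) * g)) := by
    intro w g
    rw [smul_mul_assoc, MonoidAlgebra.coeff_smul_apply, sub_mul, one_mul, MonoidAlgebra.coeff_sub,
      Finsupp.sub_apply, hb, MonoidAlgebra.coeff_single_mul_apply, dih_inv_sr, one_mul, smul_eq_mul]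
  have hA : ∀ (w : MonoidAlgebra F D) (g : DihedralGroup 9), (a * w).coeff g = w.coeff ((r (-1) : DihedralGroup 9) * g) := by
    intro w g
    rw [ha, MonoidAlgebra.coeff_single_mul_apply, dih_inv_r, one_mul]
  have hf0 : ∀ g : DihedralGroup 9, f.coeff g = 2⁻¹ * (e.coeff g + e.coeff ((sr 0 : DihedralGroup 9) * g)) -
      (2⁻¹ * ((2⁻¹ * (e.coeff ((r (-1) : DihedralGroup 9) * g) - e.coeff ((sr 0 : DihedralGroup 9) * ((r (-1) : DihedralGroup 9) * g)))) +
        (2⁻¹ * (e.coeff ((r (-1) : DihedralGroup 9) * ((sr 0 : DihedralGroup 9) * g)) - e.coeff ((sr 0 : DihedralGroup 9) * ((r (-1) : DihedralGroup 9) * ((sr 0 : DihedralGroup 9) * g))))))) := by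
    intro g
    show (((2 : F)⁻¹ • (1 + b)) * e - ((2 : F)⁻¹ • (1 + b)) * a * ((2 : F)⁻¹ • (1 - b)) * e).coeff g = _
    rw [MonoidAlgebra.coeff_sub, Finsupp.sub_apply, hP, mul_assoc, mul_assoc, hP, hA, hA, hN, hN]
  have hF1 : ∀ i : ZMod 9, f.coeff (r i) = (36:F)⁻¹ * (dihV (i.val % 3) : ℤ) := by
    intro i
    rw [hf0]
    simp only [sr_mul_r, r_mul_r, r_mul_sr, sr_mul_sr, he_r, he_sr]
    have c1 : (((-1 : ZMod 9) + i).val % 3 = 0) ↔ i.val % 3 = 1 := by revert i; decide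
    have c2 : (((0 : ZMod 9) + i - -1 - 0).val % 3 = 0) ↔ i.val % 3 = 2 := by revert i; decide
    have h : i.val % 3 = 0 ∨ i.val % 3 = 1 ∨ i.val % 3 = 2 := by omega
    rcases h with h | h | h <;>
      simp only [c1, c2, h, reduceIte, dihV] <;>
      push_cast <;>
      rw [e2, e3, e9, e36] <;>
      field_simp <;>
      norm_num <;>
      (try rw [div_self (show (78364164096:F) ≠ 0 from by
        have := pow_ne_zero 7 h36; norm_num at this; exact this)])
  have hF2 : ∀ i : ZMod 9, f.coeff (sr i) = (36:F)⁻¹ * (dihV (i.val % 3) : ℤ) := by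
    intro i
    rw [hf0]
    simp only [sr_mul_r, r_mul_r, r_mul_sr, sr_mul_sr, he_r, he_sr]
    have c1 : ((i - (0:ZMod 9)).val % 3 = 0) ↔ i.val % 3 = 0 := by revert i; decide
    have c2 : ((i - (-1:ZMod 9) - 0).val % 3 = 0) ↔ i.val % 3 = 2 := by revert i; decide
    have c3 : (((-1:ZMod 9) + (i - 0)).val % 3 = 0) ↔ i.val % 3 = 1 := by revert i; decide
    have h : i.val % 3 = 0 ∨ i.val % 3 = 1 ∨ i.val % 3 = 2 := by omega
    rcases h with h | h | h <;>
      simp only [c1, c2, c3, h, reduceIte, dihV] <;>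
      push_cast <;>
      rw [e2, e3, e9, e36] <;>
      field_simp <;>
      norm_num <;>
      (try rw [div_self (show (78364164096:F) ≠ 0 from by
        have := pow_ne_zero 7 h36; norm_num at this; exact this)])
  -- coefficients of a * f
  have h36i : (36:F)⁻¹ ≠ 0 := inv_ne_zero h36
  have haf : ∀ g : DihedralGroup 9, (a * f).coeff g = f.coeff ((r (-1) : DihedralGroup 9) * g) := fun g => hA f g
  have hG1 : ∀ i : ZMod 9, (a * f).coeff (r i) = (36:F)⁻¹ * (dihV ((i.val % 3 + 2) % 3) : ℤ) := by
    intro i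
    rw [haf, r_mul_r, hF1]
    congr 2
    revert i; decide
  have hG2 : ∀ i : ZMod 9, (a * f).coeff (sr i) = (36:F)⁻¹ * (dihV ((i.val % 3 + 1) % 3) : ℤ) := by
    intro i
    rw [haf, r_mul_sr, hF2]
    congr 2
    revert i; decide
  -- combined coefficient formula
  have hco : ∀ (x y : F) (g : DihedralGroup 9), (x • f + y • (a * f)).coeff g =
      (36:F)⁻¹ * (x * (dihA (dihCls g) : ℤ) + y * (dihB (dihCls g) : ℤ)) := by
    intro x y g
    rw [MonoidAlgebra.coeff_add, Finsupp.add_apply, MonoidAlgebra.coeff_smul_apply,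
      MonoidAlgebra.coeff_smul_apply, smul_eq_mul, smul_eq_mul]
    rcases g with i | i
    · rw [hF1, hG1]
      have hA' : dihA (dihCls (DihedralGroup.r i)) = dihV (i.val % 3) := by
        show dihA (i.val % 3) = _
        unfold dihA
        congr 1
        omega
      have hB' : dihB (dihCls (DihedralGroup.r i)) = dihV ((i.val % 3 + 2) % 3) := by
        show dihB (i.val % 3) = _
        unfold dihB
        rw [if_pos (by omega : i.val % 3 < 3)]
      rw [hA', hB']
      ring
    · rw [hF2, hG2]
      have hA' : dihA (dihCls (DihedralGroup.sr i)) = dihV (i.val % 3) := by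
        show dihA (3 + i.val % 3) = _
        unfold dihA
        congr 1
        omega
      have hB' : dihB (dihCls (DihedralGroup.sr i)) = dihV ((i.val % 3 + 1) % 3) := by
        show dihB (3 + i.val % 3) = _
        unfold dihB
        rw [if_neg (by omega : ¬ (3 + i.val % 3 < 3))]
        congr 1
        omega
      rw [hA', hB']
      ring
  -- single-multiplication coefficient helpers
  have hsg : ∀ (i : ZMod 9) (g : DihedralGroup 9),
      ((MonoidAlgebra.single (r i : DihedralGroup 9) (1:F)) * f).coeff g = f.coeff ((r (-i) : DihedralGroup 9) * g) := by
    intro i g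
    rw [MonoidAlgebra.coeff_single_mul_apply, dih_inv_r, one_mul]
  have hsg' : ∀ (i : ZMod 9) (g : DihedralGroup 9),
      ((MonoidAlgebra.single (sr i : DihedralGroup 9) (1:F)) * f).coeff g = f.coeff ((sr i : DihedralGroup 9) * g) := by
    intro i g
    rw [MonoidAlgebra.coeff_single_mul_apply, dih_inv_sr, one_mul]
  -- rotation action identities
  have hr0 : ∀ i : ZMod 9, i.val % 3 = 0 → (MonoidAlgebra.single (r i : DihedralGroup 9) (1:F)) * f = f := by
    intro i hi
    ext g
    rw [hsg]
    rcases g with j | j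
    · rw [r_mul_r, hF1, hF1]
      congr 2
      revert hi; revert i j; decide
    · rw [r_mul_sr, hF2, hF2]
      congr 2
      revert hi; revert i j; decide
  have hr1 : ∀ i : ZMod 9, i.val % 3 = 1 → (MonoidAlgebra.single (r i : DihedralGroup 9) (1:F)) * f = a * f := by
    intro i hi
    ext g
    rw [hsg]
    rcases g with j | j
    · rw [r_mul_r, hF1, hG1]
      congr 2
      revert hi; revert i j; decide
    · rw [r_mul_sr, hF2, hG2]
      congr 2
      revert hi; revert i j; decide
  have hr2 : ∀ i : ZMod 9, i.val % 3 = 2 →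
      (MonoidAlgebra.single (r i : DihedralGroup 9) (1:F)) * f = -f - a * f := by
    intro i hi
    ext g
    rw [hsg, MonoidAlgebra.coeff_sub (-f) (a * f), MonoidAlgebra.coeff_neg f, Finsupp.sub_apply, Finsupp.neg_apply]
    rcases g with j | j
    · rw [r_mul_r, hF1, hF1, hG1]
      have : dihV ((-i + j).val % 3) = -dihV (j.val % 3) - dihV ((j.val % 3 + 2) % 3) := by
        revert hi; revert i j; decide
      rw [this]
      push_cast
      ring
    · rw [r_mul_sr, hF2, hF2, hG2]
      have : dihV ((j - -i).val % 3) = -dihV (j.val % 3) - dihV ((j.val % 3 + 1) % 3) := by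
        revert hi; revert i j; decide
      rw [this]
      push_cast
      ring
  have hb0 : (MonoidAlgebra.single (sr (0:ZMod 9) : DihedralGroup 9) (1:F)) * f = f := by
    ext g
    rw [hsg']
    rcases g with j | j
    · rw [sr_mul_r, hF2, hF1]
      congr 2
      revert j; decide
    · rw [sr_mul_sr, hF1, hF2]
      congr 2
      revert j; decide
  -- the span
  set V : Submodule F (MonoidAlgebra F D) := Submodule.span F {f, a * f} with hV
  have hfV : f ∈ V := Submodule.subset_span (Set.mem_insert _ _)
  have hafV : a * f ∈ V := Submodule.subset_span (Set.mem_insert_of_mem _ rfl)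
  have hr_mem : ∀ i : ZMod 9, (MonoidAlgebra.single (r i : DihedralGroup 9) (1:F)) * f ∈ V := by
    intro i
    have h : i.val % 3 = 0 ∨ i.val % 3 = 1 ∨ i.val % 3 = 2 := by omega
    rcases h with h | h | h
    · rw [hr0 i h]; exact hfV
    · rw [hr1 i h]; exact hafV
    · rw [hr2 i h]; exact V.sub_mem (V.neg_mem hfV) hafV
  have hsr_mem : ∀ i : ZMod 9, (MonoidAlgebra.single (sr i : DihedralGroup 9) (1:F)) * f ∈ V := by
    intro i
    have key : (MonoidAlgebra.single (sr i : DihedralGroup 9) (1:F)) =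
        (MonoidAlgebra.single (r (-i) : DihedralGroup 9) (1:F)) *
          (MonoidAlgebra.single (sr (0:ZMod 9) : DihedralGroup 9) (1:F)) := by
      rw [MonoidAlgebra.single_mul_single, one_mul, r_mul_sr]
      congr 2
      ring
    rw [key, mul_assoc, hb0]
    exact hr_mem (-i)
  have hVI : Submodule.restrictScalars F (Ideal.span {f}) = V := by
    apply le_antisymm
    · intro x hx
      have hx' : x ∈ Ideal.span {f} := hx
      rw [Ideal.span, Submodule.mem_span_singleton] at hx'
      obtain ⟨α, rfl⟩ := hx'
      clear hx
      show α * f ∈ V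
      induction α using MonoidAlgebra.induction_linear with
      | zero => rw [zero_mul]; exact V.zero_mem
      | add p q hp hq => rw [add_mul]; exact V.add_mem hp hq
      | single g c =>
        have hgc : (MonoidAlgebra.single g c : MonoidAlgebra F D) =
            c • MonoidAlgebra.single g (1:F) := by
          rw [MonoidAlgebra.smul_single, smul_eq_mul, mul_one]
        rw [hgc, smul_mul_assoc]
        refine V.smul_mem c ?_
        rcases g with i | i
        · exact hr_mem i
        · exact hsr_mem i
    · rw [hV, Submodule.span_le]
      rintro x (rfl | rfl)
      · exact Ideal.subset_span (Set.mem_singleton f)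
      · exact Ideal.mul_mem_left _ a (Ideal.subset_span (Set.mem_singleton f))
  -- linear independence
  have h21 : (21:F) ≠ 0 := by
    have := hnz 21 (by norm_num) (by norm_num)
    push_cast at this; exact this
  have hli : LinearIndependent F ![f, a * f] := by
    rw [LinearIndependent.pair_iff]
    intro s t hst
    have h0 := congrArg (fun z : MonoidAlgebra F D => z.coeff (r (0:ZMod 9) : DihedralGroup 9)) hst
    have h1 := congrArg (fun z : MonoidAlgebra F D => z.coeff (r (1:ZMod 9) : DihedralGroup 9)) hst
    rw [MonoidAlgebra.coeff_add, Finsupp.add_apply, MonoidAlgebra.coeff_smul_apply,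
      MonoidAlgebra.coeff_smul_apply, hF1, hG1, MonoidAlgebra.coeff_zero, Finsupp.coe_zero, Pi.zero_apply, smul_eq_mul, smul_eq_mul] at h0 h1
    have c0 : ((0:ZMod 9).val % 3) = 0 := by decide
    have c1 : ((1:ZMod 9).val % 3) = 1 := by decide
    rw [c0] at h0
    rw [c1] at h1
    norm_num [dihV] at h0 h1
    have hs : (36:F)⁻¹ * (21 * s) = 0 := by linear_combination 4 * h0 - h1
    have hs' : (21:F) * s = 0 := (mul_eq_zero.mp hs).resolve_left h36i
    have hs0 : s = 0 := (mul_eq_zero.mp hs').resolve_left h21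
    subst hs0
    have ht : (36:F)⁻¹ * t = 0 := by linear_combination h0
    have ht0 : t = 0 := (mul_eq_zero.mp ht).resolve_left h36i
    exact ⟨rfl, ht0⟩
  -- dimension
  have hrange : (Set.range ![f, a * f]) = {f, a * f} := by
    ext z
    simp only [Set.mem_range, Fin.exists_fin_two, Set.mem_insert_iff, Set.mem_singleton_iff,
      Matrix.cons_val_zero, Matrix.cons_val_one, Matrix.head_cons]
    constructor
    · rintro (h | h) <;> [exact Or.inl h.symm; exact Or.inr h.symm]
    · rintro (h | h) <;> [exact Or.inl h.symm; exact Or.inr h.symm]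
  have hdim : Module.finrank F (Submodule.restrictScalars F (Ideal.span {f})) = 2 := by
    rw [hVI, hV, ← hrange, finrank_span_eq_card hli]
    simp
  -- weight formula
  have hwt : ∀ x y : F, wt (x • f + y • (a * f)) =
      3 * ((Finset.range 6).filter
        (fun k => x * (dihA k : F) + y * (dihB k : F) ≠ 0)).card := by
    intro x y
    unfold wt
    have hsupp : (x • f + y • (a * f)).coeff.support =
        Finset.univ.filter (fun g : DihedralGroup 9 =>
          x * (dihA (dihCls g) : F) + y * (dihB (dihCls g) : F) ≠ 0) := by
      ext g
      rw [Finsupp.mem_support_iff, Finset.mem_filter]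
      rw [hco x y g]
      simp [mul_ne_zero_iff, h36i]
    rw [hsupp]
    have Hmap : ∀ g ∈ Finset.univ.filter (fun g : DihedralGroup 9 =>
        x * (dihA (dihCls g) : F) + y * (dihB (dihCls g) : F) ≠ 0),
        dihCls g ∈ (Finset.range 6).filter
          (fun k => x * (dihA k : F) + y * (dihB k : F) ≠ 0) := by
      intro g hg
      rw [Finset.mem_filter] at hg ⊢
      refine ⟨Finset.mem_range.mpr ?_, hg.2⟩
      rcases g with i | i <;> simp [dihCls] <;> omega
    rw [Finset.card_eq_sum_card_fiberwise Hmap]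
    have hfib : ∀ k, k < 6 →
        (Finset.univ.filter (fun g : DihedralGroup 9 => dihCls g = k)).card = 3 := by
      intro k hk; interval_cases k <;> decide
    have hstep : ∀ k ∈ (Finset.range 6).filter
        (fun k => x * (dihA k : F) + y * (dihB k : F) ≠ 0),
        ((Finset.univ.filter (fun g : DihedralGroup 9 =>
          x * (dihA (dihCls g) : F) + y * (dihB (dihCls g) : F) ≠ 0)).filter
            (fun g => dihCls g = k)).card = 3 := by
      intro k hk
      rw [Finset.mem_filter, Finset.mem_range] at hk
      have heq : (Finset.univ.filter (fun g : DihedralGroup 9 =>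
          x * (dihA (dihCls g) : F) + y * (dihB (dihCls g) : F) ≠ 0)).filter
            (fun g => dihCls g = k) = Finset.univ.filter (fun g : DihedralGroup 9 => dihCls g = k) := by
        ext g
        simp only [Finset.mem_filter, Finset.mem_univ, true_and]
        constructor
        · rintro ⟨_, h⟩; exact h
        · intro h; exact ⟨by rw [h]; exact hk.2, h⟩
      rw [heq, hfib k hk.1]
    rw [Finset.sum_congr rfl hstep, Finset.sum_const, smul_eq_mul, mul_comm]
  -- minimum count
  have hminwt : ∀ x y : F, ¬(x = 0 ∧ y = 0) →
      5 ≤ ((Finset.range 6).filter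
        (fun k => x * (dihA k : F) + y * (dihB k : F) ≠ 0)).card := by
    intro x y hxy
    have hdetF : ∀ k k' : Fin 6, k.val ≠ k'.val →
        (dihA k.val * dihB k'.val - dihA k'.val * dihB k.val) ≠ 0 ∧
          (dihA k.val * dihB k'.val - dihA k'.val * dihB k.val).natAbs ∣ 2520 := by decide
    have hdet : ∀ k k' : ℕ, k < 6 → k' < 6 → k ≠ k' →
        (dihA k * dihB k' - dihA k' * dihB k) ≠ 0 ∧
          (dihA k * dihB k' - dihA k' * dihB k).natAbs ∣ 2520 := by
      intro k k' hk hk' hne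
      exact hdetF ⟨k, hk⟩ ⟨k', hk'⟩ hne
    have hZ : ((Finset.range 6).filter
        (fun k => ¬ (x * (dihA k : F) + y * (dihB k : F) ≠ 0))).card ≤ 1 := by
      rw [Finset.card_le_one]
      intro k hk k' hk'
      by_contra hne
      rw [Finset.mem_filter, Finset.mem_range, not_not] at hk hk'
      obtain ⟨hk6, hEk⟩ := hk
      obtain ⟨hk'6, hEk'⟩ := hk'
      obtain ⟨hd0, hdvd⟩ := hdet k k' hk6 hk'6 hne
      have hdF : ((dihA k * dihB k' - dihA k' * dihB k : ℤ) : F) ≠ 0 := hnz _ hd0 hdvd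
      apply hxy
      constructor
      · have hxx : ((dihA k * dihB k' - dihA k' * dihB k : ℤ) : F) * x = 0 := by
          push_cast
          linear_combination (dihB k' : F) * hEk - (dihB k : F) * hEk'
        exact (mul_eq_zero.mp hxx).resolve_left hdF
      · have hyy : ((dihA k * dihB k' - dihA k' * dihB k : ℤ) : F) * y = 0 := by
          push_cast
          linear_combination (dihA k : F) * hEk' - (dihA k' : F) * hEk
        exact (mul_eq_zero.mp hyy).resolve_left hdF
    have hsplit := Finset.card_filter_add_card_filter_not
      (s := Finset.range 6) (p := fun k => x * (dihA k : F) + y * (dihB k : F) ≠ 0)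
    rw [Finset.card_range] at hsplit
    omega
  -- the explicit minimum weight element
  have hvals : ∀ k : ℕ, ((1:F) * (dihA k : F) + (-4) * (dihB k : F)) =
      ((dihA k - 4 * dihB k : ℤ) : F) := by
    intro k; push_cast; ring
  have hex : ((Finset.range 6).filter
      (fun k => (1:F) * (dihA k : F) + (-4) * (dihB k : F) ≠ 0)).card = 5 := by
    have hfe : (Finset.range 6).filter
        (fun k => (1:F) * (dihA k : F) + (-4) * (dihB k : F) ≠ 0) = {1, 2, 3, 4, 5} := by
      ext k
      simp only [Finset.mem_filter, Finset.mem_range, Finset.mem_insert, Finset.mem_singleton]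
      constructor
      · rintro ⟨hk6, hne⟩
        rcases (by omega : k = 0 ∨ k = 1 ∨ k = 2 ∨ k = 3 ∨ k = 4 ∨ k = 5) with
          rfl | rfl | rfl | rfl | rfl | rfl
        · exfalso; apply hne; rw [hvals 0]; norm_num [dihA, dihB, dihV]
        · exact Or.inl rfl
        · exact Or.inr (Or.inl rfl)
        · exact Or.inr (Or.inr (Or.inl rfl))
        · exact Or.inr (Or.inr (Or.inr (Or.inl rfl)))
        · exact Or.inr (Or.inr (Or.inr (Or.inr rfl)))
      · intro hk
        have hk6 : k < 6 := by rcases hk with rfl | rfl | rfl | rfl | rfl <;> norm_num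
        refine ⟨hk6, ?_⟩
        rw [hvals k]
        have hnzk : (dihA k - 4 * dihB k : ℤ) ≠ 0 ∧ (dihA k - 4 * dihB k).natAbs ∣ 2520 := by
          rcases hk with rfl | rfl | rfl | rfl | rfl <;> decide
        exact hnz _ hnzk.1 hnzk.2
    rw [hfe]
    decide
  -- conclusion
  refine ⟨hdim, ⟨?_, ?_⟩⟩
  · refine ⟨(1:F) • f + (-4:F) • (a * f), ?_, ?_, ?_⟩
    · have hmem : (1:F) • f + (-4:F) • (a * f) ∈ V := V.add_mem (V.smul_mem _ hfV) (V.smul_mem _ hafV)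
      rw [← hVI] at hmem
      exact hmem
    · intro h0
      have h15 := hwt 1 (-4)
      rw [h0, hex] at h15
      simp [wt] at h15
    · rw [hwt 1 (-4), hex]
  · rintro n ⟨α, hαI, hα0, rfl⟩
    have hαV : α ∈ Submodule.restrictScalars F (Ideal.span {f}) := hαI
    rw [hVI] at hαV
    obtain ⟨x, y, hxyα⟩ := Submodule.mem_span_pair.mp hαV
    have hxy : ¬ (x = 0 ∧ y = 0) := by
      rintro ⟨rfl, rfl⟩
      apply hα0
      rw [← hxyα]
      simp
    rw [← hxyα, hwt x y]
    have hge := hminwt x y hxy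
    omega
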